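/- Let A be a self-adjoint endomorphism of an n-dimensional real inner product space V with orthonormal eigenbasis e_1,...,e_n and eigenvalues k_1,...,k_n. For 1 ≤ p ≤ n define A^{[p]} on Λ^p V* by (A^{[p]}ω)(v_1,...,v_p) = ∑_i ω(v_1,...,A v_i,...,v_p), and T_A^{[p]} = (tr A)·A^{[p]} − A^{[p]}∘A^{[p]}. Then for every p-subset a = {i_1 < ... < i_p} of {1,...,n}, the p-form Θ_a = θ_{i_1} ∧ ... ∧ θ_{i_p} (θ_j the dual basis) is an eigenvector of T_A^{[p]} with eigenvalue K_a · K_{★a}, where K_a = ∑_{i∈a} k_i and ★a = {1,...,n} \ a. -/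

import Mathlib

open Finset

/-- Savo: let `A` be a self-adjoint endomorphism of an
`n`-dimensional real inner product space `V` with orthonormal eigenbasis `e` and
eigenvalues `k`. Let `Ap = A^{[p]}` be the derivation extension of `A` to
alternating `p`-forms, `(A^{[p]}ω)(v₁,…,v_p) = ∑ i ω(v₁,…,A vᵢ,…,v_p)`, and
`T_A^{[p]} = (tr A) • A^{[p]} - A^{[p]} ∘ A^{[p]}`. Then for every `p`-subset
`a` of `{1,…,n}`, the wedge `Θ_a` of the corresponding dual basis elements
(given by the determinant formula) is an eigenvector of `T_A^{[p]}` with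
eigenvalue `K_a * K_{★a}`, where `K_a = ∑_{i ∈ a} k i` and `★a = aᶜ`. -/
theorem stmt10 {V : Type*} [NormedAddCommGroup V] [InnerProductSpace ℝ V]
    (n p : ℕ) (hp1 : 1 ≤ p) (hpn : p ≤ n)
    (A : V →ₗ[ℝ] V) (hA : A.IsSymmetric)
    (e : OrthonormalBasis (Fin n) ℝ V) (k : Fin n → ℝ)
    (heig : ∀ i, A (e i) = k i • e i)
    (Ap : AlternatingMap ℝ V ℝ (Fin p) →ₗ[ℝ] AlternatingMap ℝ V ℝ (Fin p))
    (hAp : ∀ (ω : AlternatingMap ℝ V ℝ (Fin p)) (v : Fin p → V),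
      Ap ω v = ∑ i : Fin p, ω (Function.update v i (A (v i))))
    (a : Finset (Fin n)) (ha : a.card = p)
    (Θ : AlternatingMap ℝ V ℝ (Fin p))
    (hΘ : ∀ v : Fin p → V,
      Θ v = Matrix.det (Matrix.of fun i j : Fin p =>
        (inner ℝ (e ((a.orderIsoOfFin ha j : a) : Fin n)) (v i) : ℝ))) :
    ((∑ i : Fin n, k i) • Ap - Ap ∘ₗ Ap) Θ =
      ((∑ i ∈ a, k i) * (∑ i ∈ aᶜ, k i)) • Θ := by
  have hortho := orthonormal_iff_ite.mp e.orthonormal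
  have key : Ap Θ = (∑ i ∈ a, k i) • Θ := by
    apply AlternatingMap.coe_multilinearMap_injective
    apply Module.Basis.ext_multilinear (fun _ => e.toBasis)
    intro v
    have hb : ∀ i, (e.toBasis (v i) : V) = e (v i) := fun i => e.coe_toBasis ▸ rfl
    simp only [AlternatingMap.coe_multilinearMap, AlternatingMap.smul_apply, hb]
    rw [hAp]
    have step : ∀ i : Fin p,
        Θ (Function.update (fun j => e (v j)) i (A (e (v i))))
          = k (v i) • Θ (fun j => e (v j)) := by
      intro i
      rw [heig, Θ.map_update_smul, Function.update_eq_self]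
    simp only [step, ← Finset.sum_smul]
    -- now: (∑ i, k (v i)) • Θ (e ∘ v) = (∑ i ∈ a, k i) • Θ (e ∘ v)
    by_cases hinj : Function.Injective v
    · by_cases hsub : ∀ i, v i ∈ a
      · congr 1
        have himg : Finset.image v Finset.univ = a := by
          apply Finset.eq_of_subset_of_card_le
          · intro x hx
            obtain ⟨i, _, rfl⟩ := Finset.mem_image.mp hx
            exact hsub i
          · rw [ha, Finset.card_image_of_injective _ hinj, Finset.card_univ,
              Fintype.card_fin]
        rw [← himg, Finset.sum_image (fun x _ y _ h => hinj h)]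
      · push_neg at hsub
        obtain ⟨i, hi⟩ := hsub
        have hz : Θ (fun j => e (v j)) = 0 := by
          rw [hΘ]
          apply Matrix.det_eq_zero_of_row_eq_zero i
          intro j
          simp only [Matrix.of_apply]
          rw [hortho]
          have : ((a.orderIsoOfFin ha j : a) : Fin n) ≠ v i := by
            intro h
            exact hi (h ▸ (a.orderIsoOfFin ha j).2)
          exact if_neg (by simpa using this)
        rw [hz, smul_zero, smul_zero]
    · rw [Function.not_injective_iff] at hinj
      obtain ⟨i, j, hij, hne⟩ := hinj
      have hz : Θ (fun j => e (v j)) = 0 :=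
        Θ.map_eq_zero_of_eq _ (by rw [hij]) hne
      rw [hz, smul_zero, smul_zero]
  have hsum : (∑ i ∈ a, k i) + (∑ i ∈ aᶜ, k i) = ∑ i : Fin n, k i :=
    Finset.sum_add_sum_compl a k
  simp only [LinearMap.sub_apply, LinearMap.smul_apply, LinearMap.comp_apply, key,
    map_smul, smul_smul]
  rw [← sub_smul]
  congr 1
  rw [← hsum]
  ring
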